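/- For every z in the upper half-plane ℍ, lim_{n→∞} ∫_{−n}^{n} (s̃ₓ(z) − z) dx = iπ/2, where s̃ₓ(z) = x + √((z−x)² − 1). -/

import Mathlib

open Complex MeasureTheory Filter

open Topology

/-- Complex square root with the branch chosen in the closed upper half-plane. -/
noncomputable def csqrtH (w : ℂ) : ℂ :=
  if 0 ≤ (w ^ (1/2 : ℂ)).im then w ^ (1/2 : ℂ) else -(w ^ (1/2 : ℂ))

/-- The slit map at `x`: `s̃ₓ(z) = x + √((z-x)² - 1)`, branch mapping ℍ into ℍ. -/
noncomputable def slitAt (x : ℝ) (z : ℂ) : ℂ := x + csqrtH ((z - x) ^ 2 - 1)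

/-- The complex derivative of the slit map at `x`: `(z-x)/√((z-x)² - 1)`. -/
noncomputable def slitDerivAt (x : ℝ) (z : ℂ) : ℂ := (z - x) / csqrtH ((z - x) ^ 2 - 1)

lemma sq_half_cpow (w : ℂ) : (w ^ (1/2 : ℂ)) ^ 2 = w := by
  rcases eq_or_ne w 0 with rfl | hw
  · rw [Complex.zero_cpow (by norm_num)]; ring
  · rw [sq, ← Complex.cpow_add _ _ hw]; norm_num

lemma im_half_cpow_pos {w : ℂ} (h : 0 < w.im) : 0 < (w ^ (1/2 : ℂ)).im := by
  have hw : w ≠ 0 := by intro h0; rw [h0] at h; simp at h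
  rw [Complex.cpow_def_of_ne_zero hw, Complex.exp_im]
  have harg1 : 0 < w.arg := lt_of_le_of_ne (Complex.arg_nonneg_iff.2 h.le)
    (by intro h0; have := (Complex.arg_eq_zero_iff.1 h0.symm).2; linarith)
  have harg2 : w.arg ≤ Real.pi := Complex.arg_le_pi w
  have him : (Complex.log w * (1/2)).im = w.arg / 2 := by
    simp [Complex.log_im]; ring
  have hre : 0 < Real.sin (Complex.log w * (1/2)).im := by
    rw [him]
    exact Real.sin_pos_of_pos_of_lt_pi (by linarith) (by
      have := Real.pi_pos; linarith)
  positivity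

lemma im_half_cpow_neg {w : ℂ} (h : w.im < 0) : (w ^ (1/2 : ℂ)).im < 0 := by
  have hw : w ≠ 0 := by intro h0; rw [h0] at h; simp at h
  rw [Complex.cpow_def_of_ne_zero hw, Complex.exp_im]
  have harg1 : w.arg < 0 := Complex.arg_neg_iff.2 h
  have harg2 : -Real.pi < w.arg := Complex.neg_pi_lt_arg w
  have him : (Complex.log w * (1/2)).im = w.arg / 2 := by
    simp [Complex.log_im]; ring
  have hsin : Real.sin (Complex.log w * (1/2)).im < 0 := by
    rw [him]
    exact Real.sin_neg_of_neg_of_neg_pi_lt (by linarith) (by linarith)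
  have hexp : 0 < Real.exp (Complex.log w * (1/2)).re := Real.exp_pos _
  nlinarith

lemma re_half_cpow_pos {w : ℂ} (h : w ∈ Complex.slitPlane) : 0 < (w ^ (1/2 : ℂ)).re := by
  have hw : w ≠ 0 := Complex.slitPlane_ne_zero h
  rw [Complex.cpow_def_of_ne_zero hw, Complex.exp_re]
  have harg1 : -Real.pi < w.arg := Complex.neg_pi_lt_arg w
  have harg2 : w.arg < Real.pi := lt_of_le_of_ne (Complex.arg_le_pi w)
    (Complex.slitPlane_arg_ne_pi h)
  have him : (Complex.log w * (1/2)).im = w.arg / 2 := by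
    simp [Complex.log_im]; ring
  have hcos : 0 < Real.cos (Complex.log w * (1/2)).im := by
    rw [him]
    exact Real.cos_pos_of_mem_Ioo ⟨by linarith, by linarith⟩
  positivity

lemma csqrtH_sq (w : ℂ) : (csqrtH w) ^ 2 = w := by
  unfold csqrtH; split_ifs
  · exact sq_half_cpow w
  · rw [neg_pow]; simp [sq_half_cpow]

lemma csqrtH_im_nonneg (w : ℂ) : 0 ≤ (csqrtH w).im := by
  unfold csqrtH; split_ifs with h
  · exact h
  · simp only [neg_im]; linarith [not_le.1 h]

lemma csqrtH_eq {w v : ℂ} (hv : v ^ 2 = w) (hvim : 0 < v.im) : csqrtH w = v := by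
  have h1 : (csqrtH w - v) * (csqrtH w + v) = 0 := by
    linear_combination (csqrtH_sq w) - hv
  rcases mul_eq_zero.1 h1 with h | h
  · exact sub_eq_zero.1 h
  · exfalso
    have h2 : csqrtH w = -v := eq_neg_of_add_eq_zero_left h
    have := csqrtH_im_nonneg w
    rw [h2, neg_im] at this
    linarith

lemma csqrtH_of_im_pos {w : ℂ} (h : 0 < w.im) : csqrtH w = w ^ (1/2 : ℂ) :=
  csqrtH_eq (sq_half_cpow w) (im_half_cpow_pos h)

lemma csqrtH_of_im_neg {w : ℂ} (h : w.im < 0) : csqrtH w = -(w ^ (1/2 : ℂ)) := by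
  refine csqrtH_eq ?_ ?_
  · rw [neg_pow]; simp [sq_half_cpow]
  · simp only [neg_im]; linarith [im_half_cpow_neg h]

-- slit plane lemma for 1 - w^2
lemma one_sub_sq_mem_slitPlane {w : ℂ} (hw : w.im ≠ 0) :
    (1 : ℂ) - w ^ 2 ∈ Complex.slitPlane := by
  rw [Complex.mem_slitPlane_iff]
  have hre : ((1:ℂ) - w ^ 2).re = 1 - (w.re * w.re - w.im * w.im) := by
    simp [sq, Complex.mul_re]
  have him : ((1:ℂ) - w ^ 2).im = -(w.re * w.im + w.im * w.re) := by
    simp [sq, Complex.mul_im]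
  rcases eq_or_ne w.re 0 with h0 | h0
  · left; rw [hre, h0]; nlinarith [mul_self_nonneg w.im]
  · right; rw [him]
    intro h
    have : w.re * w.im = 0 := by linarith [h, mul_comm w.im w.re]
    rcases mul_eq_zero.1 this with h1 | h1
    · exact h0 h1
    · exact hw h1

-- main representation
lemma csqrtH_rep {w : ℂ} (hw : 0 < w.im) :
    csqrtH (w ^ 2 - 1) = Complex.I * ((1 - w ^ 2) ^ (1/2 : ℂ)) := by
  refine csqrtH_eq ?_ ?_
  · rw [mul_pow, Complex.I_sq, sq_half_cpow]; ring
  · rw [Complex.mul_im, Complex.I_re, Complex.I_im]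
    simp only [zero_mul, one_mul, zero_add]
    exact re_half_cpow_pos (one_sub_sq_mem_slitPlane (by linarith : w.im ≠ 0))

-- scaling lemma
lemma half_cpow_scale {r : ℝ} (hr : 0 < r) {w : ℂ} (hw : w ≠ 0) :
    (((r : ℂ)) ^ 2 * w) ^ (1/2 : ℂ) = (r : ℂ) * w ^ (1/2 : ℂ) := by
  have hr2 : (0:ℝ) < r ^ 2 := by positivity
  have hrc : ((r : ℂ)) ^ 2 = ((r ^ 2 : ℝ) : ℂ) := by push_cast; ring
  have hne : ((r ^ 2 : ℝ) : ℂ) * w ≠ 0 :=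
    mul_ne_zero (by exact_mod_cast hr2.ne') hw
  rw [hrc, Complex.cpow_def_of_ne_zero hne, Complex.log_ofReal_mul hr2 hw,
    add_mul, Complex.exp_add, ← Complex.cpow_def_of_ne_zero hw]
  congr 1
  have : ((Real.log (r ^ 2) : ℝ) : ℂ) * (1/2) = ((Real.log r : ℝ) : ℂ) := by
    rw [Real.log_pow]; push_cast; ring
  rw [this, ← Complex.ofReal_exp, Real.exp_log hr]

noncomputable def Vc (z ζ : ℂ) : ℂ := Complex.I * ((1 - (z - ζ) ^ 2) ^ (1/2 : ℂ))

noncomputable def Gc (z ζ : ℂ) : ℂ :=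
  -((z - ζ) * Vc z ζ - Complex.log (z - ζ + Vc z ζ)) / 2 + (ζ - z) ^ 2 / 2

section facts
variable {z ζ : ℂ}

lemma Vc_im_pos (hw : 0 < (z - ζ).im) : 0 < (Vc z ζ).im := by
  have hu : (1:ℂ) - (z - ζ)^2 ∈ Complex.slitPlane :=
    one_sub_sq_mem_slitPlane (ne_of_gt hw)
  have := re_half_cpow_pos hu
  simp only [Vc, Complex.mul_im, Complex.I_re, Complex.I_im, zero_mul, one_mul, zero_add]
  linarith

lemma Vc_sq : (Vc z ζ) ^ 2 = (z - ζ) ^ 2 - 1 := by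
  rw [Vc, mul_pow, Complex.I_sq, sq_half_cpow]; ring

lemma Vc_ne_zero (hw : 0 < (z - ζ).im) : Vc z ζ ≠ 0 := by
  intro h; have := Vc_im_pos hw; rw [h] at this; simp at this

lemma wV_mem (hw : 0 < (z - ζ).im) : z - ζ + Vc z ζ ∈ Complex.slitPlane := by
  rw [Complex.mem_slitPlane_iff]; right
  have := Vc_im_pos hw
  simp only [Complex.add_im]
  intro h; linarith

lemma hasDerivAt_Gc (hw : 0 < (z - ζ).im) : HasDerivAt (Gc z) (Vc z ζ + (ζ - z)) ζ := by
  have hwim : (z - ζ).im ≠ 0 := ne_of_gt hw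
  have hu : (1:ℂ) - (z - ζ)^2 ∈ Complex.slitPlane := one_sub_sq_mem_slitPlane hwim
  set s : ℂ := ((1:ℂ) - (z - ζ)^2) ^ (1/2 : ℂ) with hs
  have hssq : s ^ 2 = 1 - (z - ζ)^2 := sq_half_cpow _
  have hsne : s ≠ 0 := by
    intro h0
    have : (1:ℂ) - (z - ζ)^2 = 0 := by rw [← hssq, h0]; ring
    exact Complex.slitPlane_ne_zero hu this
  have hV : Vc z ζ = Complex.I * s := rfl
  have hwVne : z - ζ + Vc z ζ ≠ 0 := Complex.slitPlane_ne_zero (wV_mem hw)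
  -- derivatives
  have h1 : HasDerivAt (fun ζ : ℂ => z - ζ) (-1) ζ := by
    simpa using (hasDerivAt_id ζ).const_sub z
  have h2 : HasDerivAt (fun ζ : ℂ => 1 - (z - ζ)^2) (2 * (z - ζ)) ζ := by
    have := (h1.pow 2).const_sub 1
    exact this.congr_deriv (by norm_num)
  have h3 : HasDerivAt (fun ζ : ℂ => ((1:ℂ) - (z - ζ)^2) ^ (1/2 : ℂ))
      ((1/2 : ℂ) * ((1 - (z - ζ)^2) ^ ((1/2 : ℂ) - 1)) * (2 * (z - ζ))) ζ :=
    h2.cpow_const hu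
  have hpow : ((1:ℂ) - (z - ζ)^2) ^ ((1/2 : ℂ) - 1) = s⁻¹ := by
    have : ((1/2 : ℂ) - 1) = -(1/2 : ℂ) := by norm_num
    rw [this, Complex.cpow_neg]
  rw [hpow] at h3
  have hV' : HasDerivAt (fun ζ : ℂ => Vc z ζ)
      (Complex.I * ((1/2 : ℂ) * s⁻¹ * (2 * (z - ζ)))) ζ := h3.const_mul Complex.I
  have hmul : HasDerivAt (fun ζ : ℂ => (z - ζ) * Vc z ζ)
      ((-1) * Vc z ζ + (z - ζ) * (Complex.I * ((1/2 : ℂ) * s⁻¹ * (2 * (z - ζ))))) ζ :=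
    h1.mul hV'
  have hlog : HasDerivAt (fun ζ : ℂ => Complex.log (z - ζ + Vc z ζ))
      (((-1) + Complex.I * ((1/2 : ℂ) * s⁻¹ * (2 * (z - ζ)))) / (z - ζ + Vc z ζ)) ζ :=
    (h1.add hV').clog (wV_mem hw)
  have hpoly : HasDerivAt (fun ζ : ℂ => (ζ - z) ^ 2) (2 * (ζ - z)) ζ := by
    have := ((hasDerivAt_id ζ).sub_const z).pow 2
    simp only [id_eq] at this
    exact this.congr_deriv (by norm_num)
  have hG : HasDerivAt (Gc z)
      (-(((-1) * Vc z ζ + (z - ζ) * (Complex.I * ((1/2 : ℂ) * s⁻¹ * (2 * (z - ζ)))))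
          - ((-1) + Complex.I * ((1/2 : ℂ) * s⁻¹ * (2 * (z - ζ)))) / (z - ζ + Vc z ζ)) / 2
        + (2 * (ζ - z)) / 2) ζ :=
    ((hmul.sub hlog).neg.div_const 2).add (hpoly.div_const 2)
  convert hG using 1
  rw [hV] at hwVne ⊢
  have hT : Complex.I * ((1/2 : ℂ) * s⁻¹ * (2 * (z - ζ))) = Complex.I * (z - ζ) / s := by
    field_simp
  rw [hT]
  have h4 : ((-1 : ℂ) + Complex.I * (z - ζ) / s) / (z - ζ + Complex.I * s) = Complex.I / s := by
    rw [div_eq_div_iff hwVne hsne]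
    field_simp
    linear_combination (-s) * Complex.I_sq
  rw [h4]
  have key : (-1 * (Complex.I * s) + (z - ζ) * (Complex.I * (z - ζ) / s)) - Complex.I / s
      = -2 * (Complex.I * s) := by
    field_simp
    linear_combination hssq
  rw [key]; ring

lemma slit_eq {z : ℂ} (hz : 0 < z.im) (x : ℝ) :
    slitAt x z - z = Vc z x + ((x : ℂ) - z) := by
  have hw : 0 < (z - (x:ℂ)).im := by simpa using hz
  rw [slitAt, csqrtH_rep hw, Vc]; ring

lemma continuous_Vc (z : ℂ) (hz : 0 < z.im) : Continuous (fun x : ℝ => Vc z x) := by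
  rw [continuous_iff_continuousAt]
  intro x
  refine ContinuousAt.mul continuousAt_const ?_
  refine ContinuousAt.cpow ?_ continuousAt_const ?_
  · fun_prop
  · exact one_sub_sq_mem_slitPlane (by simpa using hz.ne' : (z - (x:ℂ)).im ≠ 0)

lemma integral_eq {z : ℂ} (hz : 0 < z.im) (a b : ℝ) :
    ∫ x in a..b, (slitAt x z - z) = Gc z b - Gc z a := by
  have hderiv : ∀ x ∈ Set.uIcc a b, HasDerivAt (fun x : ℝ => Gc z x) (slitAt x z - z) x := by
    intro x _
    rw [slit_eq hz x]
    exact (hasDerivAt_Gc (by simpa using hz)).comp_ofReal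
  have hint : IntervalIntegrable (fun x : ℝ => slitAt x z - z) volume a b := by
    have : Continuous (fun x : ℝ => slitAt x z - z) := by
      have h2 : Continuous fun x : ℝ => Vc z x + ((x:ℂ) - z) := by
        apply (continuous_Vc z hz).add; fun_prop
      exact (funext (slit_eq hz) : (fun x : ℝ => slitAt x z - z) = _) ▸ h2
    exact this.intervalIntegrable a b
  exact intervalIntegral.integral_eq_sub_of_hasDerivAt hderiv hint

noncomputable def gg (z : ℂ) (t : ℝ) : ℂ := (((t:ℂ)*z - 1)^2 - (t:ℂ)^2) ^ (1/2 : ℂ)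
noncomputable def hh (z : ℂ) (t : ℝ) : ℂ := (((t:ℂ)*z + 1)^2 - (t:ℂ)^2) ^ (1/2 : ℂ)
noncomputable def Phi (z : ℂ) (t : ℝ) : ℂ :=
  (((t:ℂ)*z - 1)/(((t:ℂ)*z - 1) - gg z t) - ((t:ℂ)*z + 1)/(((t:ℂ)*z + 1) + hh z t))/2
  + (Complex.log (((t:ℂ)*z - 1) - gg z t) - Complex.log (((t:ℂ)*z + 1) + hh z t))/2

lemma keyA {z : ℂ} (hz : 0 < z.im) {r : ℝ} (hr : 0 < r) (h1 : z.re < r) (h2 : -r < z.re) :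
    Gc z ((r:ℝ):ℂ) - Gc z (-((r:ℝ):ℂ)) = Phi z (1/r) := by
  set t : ℝ := 1/r with htdef
  have ht : 0 < t := by positivity
  have hr0 : (r:ℂ) ≠ 0 := by exact_mod_cast hr.ne'
  have ht0 : (t:ℂ) ≠ 0 := by exact_mod_cast ht.ne'
  have hr_eq : (r:ℂ) = ((t:ℂ))⁻¹ := by
    rw [htdef]; push_cast; rw [one_div, inv_inv]
  -- imaginary parts of the shifted squares
  have himr : ((z - (r:ℂ))^2 - 1).im = 2*(z.re - r)*z.im := by
    simp [sq, Complex.mul_im]; ring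
  have himmr : ((z + (r:ℂ))^2 - 1).im = 2*(z.re + r)*z.im := by
    simp [sq, Complex.mul_im]; ring
  have himr' : ((z - (r:ℂ))^2 - 1).im < 0 := by rw [himr]; nlinarith
  have himmr' : ((z + (r:ℂ))^2 - 1).im > 0 := by rw [himmr]; nlinarith
  -- factorizations
  have hfact1 : (z - (r:ℂ))^2 - 1 = (r:ℂ)^2 * ((((t:ℂ))*z - 1)^2 - ((t:ℂ))^2) := by
    rw [hr_eq]; field_simp
  have hfact2 : (z + (r:ℂ))^2 - 1 = (r:ℂ)^2 * ((((t:ℂ))*z + 1)^2 - ((t:ℂ))^2) := by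
    rw [hr_eq]; field_simp
  have hbase1 : (((t:ℂ))*z - 1)^2 - ((t:ℂ))^2 ≠ 0 := by
    intro h0
    rw [h0, mul_zero] at hfact1
    rw [hfact1] at himr'; simp at himr'
  have hbase2 : (((t:ℂ))*z + 1)^2 - ((t:ℂ))^2 ≠ 0 := by
    intro h0
    rw [h0, mul_zero] at hfact2
    rw [hfact2] at himmr'; simp at himmr'
  -- Vc values
  have hVr : Vc z ((r:ℝ):ℂ) = -((r:ℂ) * gg z t) := by
    have e1 : Vc z ((r:ℝ):ℂ) = csqrtH ((z - (r:ℂ))^2 - 1) :=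
      (csqrtH_rep (by simpa using hz)).symm
    rw [e1, csqrtH_of_im_neg himr', hfact1, half_cpow_scale hr hbase1, gg]
  have hVmr : Vc z (-((r:ℝ):ℂ)) = (r:ℂ) * hh z t := by
    have e1 : Vc z (-((r:ℝ):ℂ)) = csqrtH ((z + (r:ℂ))^2 - 1) := by
      rw [Vc, (show z - -((r:ℝ):ℂ) = z + (r:ℂ) by ring)]
      exact (csqrtH_rep (by simpa using hz)).symm
    rw [e1, csqrtH_of_im_pos himmr', hfact2, half_cpow_scale hr hbase2, hh]
  -- c and d
  set c : ℂ := ((t:ℂ)*z - 1) - gg z t with hcdef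
  set d : ℂ := ((t:ℂ)*z + 1) + hh z t with hddef
  have hrc : z - ((r:ℝ):ℂ) + Vc z ((r:ℝ):ℂ) = (r:ℂ) * c := by
    rw [hVr, hcdef, hr_eq]; field_simp; ring
  have hrd : z + ((r:ℝ):ℂ) + Vc z (-((r:ℝ):ℂ)) = (r:ℂ) * d := by
    rw [hVmr, hddef, hr_eq]; field_simp
  have hc0 : c ≠ 0 := by
    intro h0
    have h3 : 0 < ((r:ℂ) * c).im := by
      rw [← hrc]
      have := Vc_im_pos (z := z) (ζ := ((r:ℝ):ℂ)) (by simpa using hz)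
      simp only [Complex.add_im, Complex.sub_im, Complex.ofReal_im]
      linarith
    rw [h0, mul_zero] at h3; simp at h3
  have hd0 : d ≠ 0 := by
    intro h0
    have h3 : 0 < ((r:ℂ) * d).im := by
      rw [← hrd]
      have := Vc_im_pos (z := z) (ζ := -((r:ℝ):ℂ)) (by simpa using hz)
      simp only [Complex.add_im, Complex.ofReal_im]
      linarith
    rw [h0, mul_zero] at h3; simp at h3
  -- logs
  have hlog1 : Complex.log (z - ((r:ℝ):ℂ) + Vc z ((r:ℝ):ℂ)) = Real.log r + Complex.log c := by
    rw [hrc, Complex.log_ofReal_mul hr hc0]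
  have hlog2 : Complex.log (z + ((r:ℝ):ℂ) + Vc z (-((r:ℝ):ℂ))) = Real.log r + Complex.log d := by
    rw [hrd, Complex.log_ofReal_mul hr hd0]
  -- square facts
  have hg2 : (gg z t)^2 = (((t:ℂ))*z - 1)^2 - ((t:ℂ))^2 := sq_half_cpow _
  have hh2 : (hh z t)^2 = (((t:ℂ))*z + 1)^2 - ((t:ℂ))^2 := sq_half_cpow _
  -- assemble
  rw [Gc, Gc, Phi]
  have harg : z - -((r:ℝ):ℂ) + Vc z (-((r:ℝ):ℂ)) = z + ((r:ℝ):ℂ) + Vc z (-((r:ℝ):ℂ)) := by ring_nf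
  rw [harg, hlog1, hlog2, hVr, hVmr, hr_eq]
  rw [← hcdef, ← hddef]
  field_simp
  linear_combination (norm := ring_nf)
    ((((t:ℂ)*z - 1) * gg z t + ((t:ℂ)*z + 1) * hh z t + ((t:ℂ)*z - 1)^2 - ((t:ℂ)*z + 1)^2) * d
        + (t:ℂ)^2 * ((t:ℂ)*z + 1)) * hcdef
    + ((((t:ℂ)*z - 1) * gg z t + ((t:ℂ)*z + 1) * hh z t + ((t:ℂ)*z - 1)^2 - ((t:ℂ)*z + 1)^2)
        * (((t:ℂ)*z - 1) - gg z t) - (t:ℂ)^2 * ((t:ℂ)*z - 1)) * hddef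
    + (-(((t:ℂ)*z - 1) * (((t:ℂ)*z + 1) + hh z t))) * hg2
    + (((t:ℂ)*z + 1) * (((t:ℂ)*z - 1) - gg z t)) * hh2


lemma gg_cont {z : ℂ} : ContinuousAt (gg z) 0 := by
  refine ContinuousAt.cpow ?_ continuousAt_const ?_
  · fun_prop
  · norm_num [Complex.mem_slitPlane_iff]

lemma hh_cont {z : ℂ} : ContinuousAt (hh z) 0 := by
  refine ContinuousAt.cpow ?_ continuousAt_const ?_
  · fun_prop
  · norm_num [Complex.mem_slitPlane_iff]

lemma gg_zero {z : ℂ} : gg z 0 = 1 := by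
  simp [gg]

lemma hh_zero {z : ℂ} : hh z 0 = 1 := by
  simp [hh]

lemma keyB {z : ℂ} (hz : 0 < z.im) :
    Tendsto (Phi z) (𝓝[>] (0:ℝ)) (𝓝 (Complex.I * Real.pi / 2)) := by
  -- part 1 : the rational part tends to 0
  have hF1 : Tendsto (fun t : ℝ =>
      (((t:ℂ)*z - 1)/(((t:ℂ)*z - 1) - gg z t) - ((t:ℂ)*z + 1)/(((t:ℂ)*z + 1) + hh z t))/2)
      (𝓝[>] (0:ℝ)) (𝓝 0) := by
    have hca : ContinuousAt (fun t : ℝ =>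
        (((t:ℂ)*z - 1)/(((t:ℂ)*z - 1) - gg z t) - ((t:ℂ)*z + 1)/(((t:ℂ)*z + 1) + hh z t))/2) 0 := by
      apply ContinuousAt.div_const
      apply ContinuousAt.sub
      · apply ContinuousAt.div (by fun_prop) (ContinuousAt.sub (by fun_prop) gg_cont)
        norm_num [gg_zero]
      · apply ContinuousAt.div (by fun_prop) (ContinuousAt.add (by fun_prop) hh_cont)
        norm_num [hh_zero]
    have h2 : Tendsto (fun t : ℝ =>
        (((t:ℂ)*z - 1)/(((t:ℂ)*z - 1) - gg z t) - ((t:ℂ)*z + 1)/(((t:ℂ)*z + 1) + hh z t))/2)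
        (𝓝[>] (0:ℝ)) (𝓝 (((((0:ℝ):ℂ)*z - 1)/((((0:ℝ):ℂ)*z - 1) - gg z 0)
          - (((0:ℝ):ℂ)*z + 1)/((((0:ℝ):ℂ)*z + 1) + hh z 0))/2)) :=
      hca.continuousWithinAt (s := Set.Ioi (0:ℝ))
    convert h2 using 2
    norm_num [gg_zero, hh_zero]
  -- part 2a : log c tends to Real.log 2 + π I
  have hc_tendsto : Tendsto (fun t : ℝ => ((t:ℂ)*z - 1) - gg z t) (𝓝[>] (0:ℝ))
      (𝓝[{w : ℂ | 0 ≤ w.im}] (-2)) := by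
    rw [tendsto_nhdsWithin_iff]
    constructor
    · have hca : ContinuousAt (fun t : ℝ => ((t:ℂ)*z - 1) - gg z t) 0 :=
        ContinuousAt.sub (by fun_prop) gg_cont
      have h2 : Tendsto (fun t : ℝ => ((t:ℂ)*z - 1) - gg z t) (𝓝[>] (0:ℝ))
          (𝓝 ((((0:ℝ):ℂ)*z - 1) - gg z 0)) :=
        hca.continuousWithinAt (s := Set.Ioi (0:ℝ))
      convert h2 using 2
      simp [gg_zero]; ring
    · have h1 : ∀ᶠ t : ℝ in 𝓝[>] (0:ℝ), t * z.re < 1 := by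
        have ht : Tendsto (fun t : ℝ => t * z.re) (𝓝[>] (0:ℝ)) (𝓝 0) := by
          have hc : Continuous (fun t : ℝ => t * z.re) := by fun_prop
          have h3 : Tendsto (fun t : ℝ => t * z.re) (𝓝[>] (0:ℝ)) (𝓝 ((0:ℝ) * z.re)) :=
            hc.continuousAt.continuousWithinAt (s := Set.Ioi (0:ℝ))
          simpa using h3
        exact ht.eventually_lt_const zero_lt_one
      filter_upwards [h1, eventually_mem_nhdsWithin] with t ht1 ht0
      have ht0' : (0:ℝ) < t := ht0
      have himb : ((((t:ℂ)*z - 1)^2 - (t:ℂ)^2)).im = 2*(t*z.re - 1)*(t*z.im) := by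
        simp [sq, Complex.mul_im, Complex.mul_re]
        ring
      have himb' : ((((t:ℂ)*z - 1)^2 - (t:ℂ)^2)).im < 0 := by
        rw [himb]
        nlinarith [mul_pos (sub_pos.mpr ht1) (mul_pos ht0' hz)]
      have := im_half_cpow_neg himb'
      show 0 ≤ (((t:ℂ)*z - 1) - gg z t).im
      have hgim : (gg z t).im < 0 := this
      simp only [Complex.sub_im, Complex.mul_im, Complex.one_im, Complex.ofReal_im,
        Complex.ofReal_re, Complex.one_re]
      nlinarith
  have hF2a : Tendsto (fun t : ℝ => Complex.log (((t:ℂ)*z - 1) - gg z t)) (𝓝[>] (0:ℝ))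
      (𝓝 ((Real.log 2 : ℝ) + Real.pi * Complex.I)) := by
    have hlog := Complex.tendsto_log_nhdsWithin_im_nonneg_of_re_neg_of_im_zero
      (show (-2 : ℂ).re < 0 by norm_num) (show (-2 : ℂ).im = 0 by norm_num)
    have habs : ‖(-2 : ℂ)‖ = 2 := by norm_num
    rw [habs] at hlog
    exact hlog.comp hc_tendsto
  -- part 2b : log d tends to Real.log 2
  have hF2b : Tendsto (fun t : ℝ => Complex.log (((t:ℂ)*z + 1) + hh z t)) (𝓝[>] (0:ℝ))
      (𝓝 ((Real.log 2 : ℝ))) := by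
    have hd : ContinuousAt (fun t : ℝ => ((t:ℂ)*z + 1) + hh z t) 0 :=
      ContinuousAt.add (by fun_prop) hh_cont
    have hpt : ((0:ℝ):ℂ)*z + 1 + hh z 0 ∈ Complex.slitPlane := by
      norm_num [hh_zero, Complex.mem_slitPlane_iff]
    have hca := ContinuousAt.comp (g := Complex.log)
      (f := fun t : ℝ => ((t:ℂ)*z + 1) + hh z t) (x := (0:ℝ)) (continuousAt_clog hpt) hd
    have h2 : Tendsto (fun t : ℝ => Complex.log (((t:ℂ)*z + 1) + hh z t)) (𝓝[>] (0:ℝ))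
        (𝓝 (Complex.log (((0:ℝ):ℂ)*z + 1 + hh z 0))) :=
      hca.continuousWithinAt (s := Set.Ioi (0:ℝ))
    have hval : Complex.log (((0:ℝ):ℂ)*z + 1 + hh z 0) = ((Real.log 2 : ℝ) : ℂ) := by
      have hb : ((0:ℝ):ℂ)*z + 1 + hh z 0 = ((2:ℝ):ℂ) := by
        rw [hh_zero]; norm_num
      rw [hb, ← Complex.ofReal_log (by norm_num : (0:ℝ) ≤ 2)]
    rwa [hval] at h2
  -- combine
  have hsum := hF1.add ((hF2a.sub hF2b).div_const 2)
  have hPhi : Phi z = fun t : ℝ =>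
      (((t:ℂ)*z - 1)/(((t:ℂ)*z - 1) - gg z t) - ((t:ℂ)*z + 1)/(((t:ℂ)*z + 1) + hh z t))/2
      + (Complex.log (((t:ℂ)*z - 1) - gg z t) - Complex.log (((t:ℂ)*z + 1) + hh z t))/2 := rfl
  have hval2 : Complex.I * (Real.pi : ℝ) / 2
      = 0 + (((Real.log 2 : ℝ):ℂ) + (Real.pi:ℝ) * Complex.I - ((Real.log 2:ℝ):ℂ)) / 2 := by
    ring
  rw [hPhi, hval2]
  exact hsum

/-- `lim_{n→∞} ∫_{-n}^{n} (s̃ₓ(z) - z) dx = iπ/2` for every `z ∈ ℍ`. -/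
theorem stmt_3 (z : ℂ) (hz : 0 < z.im) :
    Tendsto (fun n : ℕ => ∫ x in (-(n:ℝ))..(n:ℝ), (slitAt x z - z))
      atTop (nhds (Complex.I * Real.pi / 2)) := by
  have hcomp : Tendsto (fun n : ℕ => Phi z (1/(n:ℝ))) atTop (𝓝 (Complex.I * Real.pi / 2)) := by
    apply (keyB hz).comp
    rw [tendsto_nhdsWithin_iff]
    refine ⟨tendsto_one_div_atTop_nhds_zero_nat, ?_⟩
    filter_upwards [eventually_gt_atTop 0] with n hn
    have : (0:ℝ) < (n:ℝ) := by exact_mod_cast hn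
    exact Set.mem_Ioi.2 (one_div_pos.2 this)
  apply hcomp.congr'
  filter_upwards [eventually_gt_atTop ⌈|z.re|⌉₊] with n hn
  have habs : |z.re| < (n:ℝ) :=
    lt_of_le_of_lt (Nat.le_ceil _) (by exact_mod_cast hn)
  have h0 : (0:ℝ) < n := lt_of_le_of_lt (abs_nonneg _) habs
  have h1 : z.re < (n:ℝ) := (abs_lt.1 habs).2
  have h2 : -(n:ℝ) < z.re := (abs_lt.1 habs).1
  rw [integral_eq hz, Complex.ofReal_neg]
  exact (keyA hz h0 h1 h2).symm
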